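/- For any real λ > 0, any real x, and any t ≥ 0: Pr[Lap(λ) > x - 1]·Pr[Lap(λ) ≤ x - 1] ≥ e^{1/λ}·Pr[Lap(λ) > x]·Pr[Lap(λ) ≤ x - 2]. -/

import Mathlib

open Real MeasureTheory

/-- Pr[Lap(l) > t] for the Laplace distribution with scale l,
density (1/(2l))·exp(-|y|/l). -/
noncomputable def lapTail (l t : ℝ) : ℝ :=
  ∫ y in Set.Ioi t, (1 / (2 * l)) * Real.exp (-|y| / l)

/-- Pr[Lap(l) ≤ t]. -/
noncomputable def lapCDF (l t : ℝ) : ℝ :=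
  ∫ y in Set.Iic t, (1 / (2 * l)) * Real.exp (-|y| / l)

lemma lapCDF_eq_lapTail_neg (l t : ℝ) : lapCDF l t = lapTail l (-t) := by
  unfold lapCDF lapTail
  rw [← integral_comp_neg_Iic t (fun y => (1 / (2 * l)) * Real.exp (-|y| / l))]
  simp [abs_neg]

lemma lap_density_cont (l : ℝ) :
    Continuous (fun y : ℝ => (1 / (2 * l)) * Real.exp (-|y| / l)) := by
  fun_prop

lemma lapTail_integrableOn (l : ℝ) (hl : 0 < l) (t : ℝ) :
    IntegrableOn (fun y : ℝ => (1 / (2 * l)) * Real.exp (-|y| / l)) (Set.Ioi t) := by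
  have hIoi0 : IntegrableOn (fun y : ℝ => (1 / (2 * l)) * Real.exp (-|y| / l)) (Set.Ioi 0) := by
    have h := (exp_neg_integrableOn_Ioi 0 (show (0:ℝ) < 1 / l by positivity)).const_mul
      (1 / (2 * l))
    apply MeasureTheory.IntegrableOn.congr_fun h ?_ measurableSet_Ioi
    intro y hy
    simp only [Set.mem_Ioi] at hy
    simp only [abs_of_pos hy]
    ring_nf
  rcases le_or_gt t 0 with h | h
  · have : Set.Ioi t = Set.Ioc t 0 ∪ Set.Ioi 0 := by
      rw [Set.Ioc_union_Ioi_eq_Ioi h]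
    rw [this]
    exact ((lap_density_cont l).integrableOn_Ioc).union hIoi0
  · exact hIoi0.mono_set (Set.Ioi_subset_Ioi h.le)

lemma lapTail_nonneg (l t : ℝ) (hl : 0 < l) : 0 ≤ lapTail l t := by
  apply setIntegral_nonneg measurableSet_Ioi
  intro y _
  positivity

lemma lapTail_anti (l : ℝ) (hl : 0 < l) {a b : ℝ} (hab : a ≤ b) :
    lapTail l b ≤ lapTail l a := by
  apply setIntegral_mono_set (lapTail_integrableOn l hl a)
  · filter_upwards with y
    positivity
  · filter_upwards with y hy
    exact lt_of_le_of_lt hab hy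

lemma lapTail_eq (l t : ℝ) (hl : 0 < l) (ht : 0 ≤ t) :
    lapTail l t = (1 / 2) * Real.exp (-t / l) := by
  unfold lapTail
  have hcongr : ∀ y ∈ Set.Ioi t, (1 / (2 * l)) * Real.exp (-|y| / l)
      = (1 / (2 * l)) * Real.exp (-y / l) := by
    intro y hy
    rw [abs_of_pos (lt_of_le_of_lt ht hy)]
  rw [setIntegral_congr_fun measurableSet_Ioi hcongr]
  have hderiv : ∀ y : ℝ, HasDerivAt (fun y : ℝ => -(1/2) * Real.exp (-y / l))
      ((1 / (2 * l)) * Real.exp (-y / l)) y := by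
    intro y
    have h1 : HasDerivAt (fun y : ℝ => -y / l) (-(1/l)) y := by
      convert ((hasDerivAt_id y).neg.div_const l) using 1
      case e'_9 => ring
      all_goals rfl
    have h2 := (h1.exp).const_mul (-(1/2) : ℝ)
    convert h2 using 1
    case e'_9 => field_simp
    all_goals rfl
  have hint : IntegrableOn (fun y : ℝ => (1 / (2 * l)) * Real.exp (-y / l)) (Set.Ioi t) := by
    have h := (exp_neg_integrableOn_Ioi t (show (0:ℝ) < 1 / l by positivity)).const_mul
      (1 / (2 * l))
    apply MeasureTheory.IntegrableOn.congr_fun h ?_ measurableSet_Ioi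
    intro y _
    ring_nf
  have htend : Filter.Tendsto (fun y : ℝ => -(1/2) * Real.exp (-y / l)) Filter.atTop (nhds 0) := by
    have : Filter.Tendsto (fun y : ℝ => -y / l) Filter.atTop Filter.atBot := by
      apply Filter.Tendsto.atBot_div_const hl
      exact Filter.tendsto_neg_atBot_iff.mpr Filter.tendsto_id
    have := (Real.tendsto_exp_atBot.comp this).const_mul (-(1/2) : ℝ)
    simpa using this
  rw [integral_Ioi_of_hasDerivAt_of_tendsto
    ((hderiv t).continuousAt.continuousWithinAt) (fun y _ => hderiv y) hint htend]
  ring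

/-- Pr[Lap>x-1]·Pr[Lap≤x-1] ≥ e^{1/λ}·Pr[Lap>x]·Pr[Lap≤x-2]. -/
theorem stmt11 (l x t : ℝ) (hl : 0 < l) (ht : 0 ≤ t) :
    lapTail l (x - 1) * lapCDF l (x - 1) ≥
      Real.exp (1 / l) * (lapTail l x * lapCDF l (x - 2)) := by
  rw [lapCDF_eq_lapTail_neg, lapCDF_eq_lapTail_neg, ge_iff_le]
  have hexp : (0:ℝ) < Real.exp (1 / l) := Real.exp_pos _
  rcases le_or_gt 1 x with hx | hx
  · have h1 : lapTail l (x - 1) = Real.exp (1 / l) * lapTail l x := by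
      rw [lapTail_eq l (x - 1) hl (by linarith), lapTail_eq l x hl (by linarith)]
      have e : Real.exp (1 / l) * Real.exp (-x / l) = Real.exp (-(x - 1) / l) := by
        rw [← Real.exp_add]; congr 1; field_simp; ring
      rw [← e]; ring
    have h2 : lapTail l (-(x - 2)) ≤ lapTail l (-(x - 1)) := lapTail_anti l hl (by linarith)
    rw [h1]
    calc Real.exp (1 / l) * (lapTail l x * lapTail l (-(x - 2)))
        = (Real.exp (1 / l) * lapTail l x) * lapTail l (-(x - 2)) := by ring
      _ ≤ (Real.exp (1 / l) * lapTail l x) * lapTail l (-(x - 1)) :=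
          mul_le_mul_of_nonneg_left h2 (mul_nonneg hexp.le (lapTail_nonneg l x hl))
  · have h1 : lapTail l (-(x - 1)) = Real.exp (1 / l) * lapTail l (-(x - 2)) := by
      rw [lapTail_eq l (-(x - 1)) hl (by linarith), lapTail_eq l (-(x - 2)) hl (by linarith)]
      have e : Real.exp (1 / l) * Real.exp (- -(x - 2) / l) = Real.exp (- -(x - 1) / l) := by
        rw [← Real.exp_add]; congr 1; field_simp; ring
      rw [← e]; ring
    have h2 : lapTail l x ≤ lapTail l (x - 1) := lapTail_anti l hl (by linarith)
    rw [h1]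
    calc Real.exp (1 / l) * (lapTail l x * lapTail l (-(x - 2)))
        = (Real.exp (1 / l) * lapTail l (-(x - 2))) * lapTail l x := by ring
      _ ≤ (Real.exp (1 / l) * lapTail l (-(x - 2))) * lapTail l (x - 1) :=
          mul_le_mul_of_nonneg_left h2
            (mul_nonneg hexp.le (lapTail_nonneg l (-(x - 2)) hl))
      _ = lapTail l (x - 1) * (Real.exp (1 / l) * lapTail l (-(x - 2))) := by ring
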